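/- Let a_1,...,a_n be integers with 1 ≤ a_i ≤ n for all i, and define y_i = (a_i mod n) + 1. Then the multiset {a_1,...,a_n} equals the multiset {y_1,...,y_n} if and only if (a_1,...,a_n) is a permutation of (1,...,n). -/
import Mathlib


/-- With `1 ≤ a i ≤ n` and `y i = (a i mod n) + 1`, the multiset `{a i}` equals the
multiset `{y i}` iff `(a 1, …, a n)` is a permutation of `(1, …, n)` (i.e. the
multiset `{a i}` is exactly `{1, …, n}`). -/
theorem stmt_3 (n : ℕ) (hn : 0 < n) (a : Fin n → ℕ)
    (ha : ∀ i, 1 ≤ a i ∧ a i ≤ n) :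
    (Finset.univ.val.map a = Finset.univ.val.map (fun i => a i % n + 1)) ↔
      Finset.univ.val.map a = Finset.univ.val.map (fun i : Fin n => (i : ℕ) + 1) := by
  classical
  haveI : NeZero n := ⟨hn.ne'⟩
  set f : ℕ → ℕ := fun x => x % n + 1 with hf
  set M : Multiset ℕ := Finset.univ.val.map a with hM
  set N : Multiset ℕ := Finset.univ.val.map (fun i : Fin n => (i : ℕ) + 1) with hN
  have hmm : Finset.univ.val.map (fun i => a i % n + 1) = M.map f := by
    rw [hM, Multiset.map_map]; rfl
  have hMmem : ∀ x ∈ M, 1 ≤ x ∧ x ≤ n := by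
    intro x hx
    rw [hM, Multiset.mem_map] at hx
    obtain ⟨i, _, rfl⟩ := hx
    exact ha i
  have hmodlem : ∀ x, 1 ≤ x → x ≤ n → f x = if x = n then 1 else x + 1 := by
    intro x h1 h2
    simp only [hf]
    rcases eq_or_lt_of_le h2 with rfl | h
    · simp
    · rw [Nat.mod_eq_of_lt h, if_neg h.ne]
  have hfinj : ∀ x y, 1 ≤ x → x ≤ n → 1 ≤ y → y ≤ n → f x = f y → x = y := by
    intro x y hx1 hx2 hy1 hy2 hxy
    rw [hmodlem x hx1 hx2, hmodlem y hy1 hy2] at hxy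
    split_ifs at hxy <;> omega
  have hNnodup : N.Nodup := by
    rw [hN]
    refine Multiset.Nodup.map ?_ Finset.univ.nodup
    intro i j hij
    exact Fin.ext (by simpa using hij)
  have hNmem : ∀ b : ℕ, b ∈ N ↔ 1 ≤ b ∧ b ≤ n := by
    intro b
    rw [hN, Multiset.mem_map]
    constructor
    · rintro ⟨i, _, rfl⟩
      exact ⟨by omega, by have := i.isLt; omega⟩
    · rintro ⟨h1, h2⟩
      exact ⟨⟨b - 1, by omega⟩, by simp, by simp; omega⟩
  have hNcount : ∀ b, Multiset.count b N = if 1 ≤ b ∧ b ≤ n then 1 else 0 := by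
    intro b
    split_ifs with hb
    · exact Multiset.count_eq_one_of_mem hNnodup ((hNmem b).2 hb)
    · exact Multiset.count_eq_zero.2 (fun h => hb ((hNmem b).1 h))
  have hMcard : Multiset.card M = n := by
    rw [hM, Multiset.card_map]
    simp
  constructor
  · intro h
    rw [hmm] at h
    -- step lemma
    have hstep : ∀ x, 1 ≤ x → x ≤ n → Multiset.count (f x) M = Multiset.count x M := by
      intro x hx1 hx2
      conv_lhs => rw [h]
      rw [Multiset.count_map]
      have : Multiset.filter (fun y => f x = f y) M = Multiset.filter (fun y => x = y) M := by
        refine Multiset.filter_congr ?_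
        intro y hy
        obtain ⟨hy1, hy2⟩ := hMmem y hy
        constructor
        · intro hfe; exact hfinj x y hx1 hx2 hy1 hy2 hfe
        · rintro rfl; rfl
      rw [this, ← Multiset.count_eq_card_filter_eq]
    have hconst : ∀ k, k < n → Multiset.count (k + 1) M = Multiset.count 1 M := by
      intro k hk
      induction k with
      | zero => rfl
      | succ k ih =>
        have hk' : k < n := by omega
        have hfe : f (k + 1) = k + 2 := by
          rw [hmodlem (k + 1) (by omega) (by omega), if_neg (by omega)]
        calc Multiset.count (k + 1 + 1) M = Multiset.count (f (k + 1)) M := by rw [hfe]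
          _ = Multiset.count (k + 1) M := hstep (k + 1) (by omega) (by omega)
          _ = Multiset.count 1 M := ih hk'
    have hsub : M.toFinset ⊆ Finset.Icc 1 n := by
      intro x hx
      rw [Multiset.mem_toFinset] at hx
      rw [Finset.mem_Icc]
      exact hMmem x hx
    have hsum : ∑ x ∈ Finset.Icc 1 n, Multiset.count x M = n := by
      have h1 : ∑ x ∈ Finset.Icc 1 n, Multiset.count x M
          = ∑ x ∈ M.toFinset, Multiset.count x M := by
        refine (Finset.sum_subset hsub ?_).symm
        intro x _ hx
        rw [Multiset.mem_toFinset] at hx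
        exact Multiset.count_eq_zero.2 hx
      rw [h1, Multiset.toFinset_sum_count_eq, hMcard]
    have hsum2 : ∑ x ∈ Finset.Icc 1 n, Multiset.count x M
        = n * Multiset.count 1 M := by
      have h1 : ∀ x ∈ Finset.Icc 1 n, Multiset.count x M = Multiset.count 1 M := by
        intro x hx
        rw [Finset.mem_Icc] at hx
        have : x = (x - 1) + 1 := by omega
        rw [this]
        exact hconst (x - 1) (by omega)
      rw [Finset.sum_congr rfl h1, Finset.sum_const, smul_eq_mul, Nat.card_Icc, Nat.add_sub_cancel]
    have hone : Multiset.count 1 M = 1 := by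
      rw [hsum2] at hsum
      have := hn
      nlinarith [Nat.le_of_eq hsum]
    refine Multiset.ext.2 (fun b => ?_)
    rw [hNcount b]
    split_ifs with hb
    · have : b = (b - 1) + 1 := by omega
      rw [this, hconst (b - 1) (by omega), hone]
    · exact Multiset.count_eq_zero.2 (fun hmem => hb (hMmem b hmem))
  · intro h
    rw [hmm, h]
    -- show N.map f = N
    have key : N.map f = N := by
      rw [hN, Multiset.map_map]
      have hfun : ∀ i : Fin n, f ((i : ℕ) + 1) = ((Equiv.addRight (1 : Fin n)) i : ℕ) + 1 := by
        intro i
        have hv : ((i + 1 : Fin n) : ℕ) = ((i : ℕ) + 1) % n := by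
          rw [Fin.add_def]
          simp only [Fin.val_one']
          exact (Nat.ModEq.add_left (i : ℕ) (Nat.mod_modEq 1 n)).symm ▸ rfl
        simp only [hf, Equiv.coe_addRight]
        rw [hv]
      calc Multiset.map (f ∘ fun i : Fin n => (i : ℕ) + 1) Finset.univ.val
          = Multiset.map ((fun j : Fin n => (j : ℕ) + 1) ∘ (Equiv.addRight (1 : Fin n)))
              Finset.univ.val := by
            refine Multiset.map_congr rfl ?_
            intro i _
            exact hfun i
        _ = Multiset.map (fun j : Fin n => (j : ℕ) + 1)
              (Multiset.map (Equiv.addRight (1 : Fin n)) Finset.univ.val) := by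
            rw [Multiset.map_map]
        _ = N := by
            have : Multiset.map (⇑(Equiv.addRight (1 : Fin n))) Finset.univ.val
                = Finset.univ.val := by
              have := Finset.map_univ_equiv (Equiv.addRight (1 : Fin n))
              calc Multiset.map (⇑(Equiv.addRight (1 : Fin n))) Finset.univ.val
                  = (Finset.map (Equiv.addRight (1 : Fin n)).toEmbedding Finset.univ).val := rfl
                _ = Finset.univ.val := by rw [this]
            rw [this, hN]
    exact key.symm
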